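/- Let q be a Boolean self-join-free conjunctive query, D a tuple-independent probabilistic database, and Δ, Δ' two dissociations of q with Δ ≼ Δ' (i.e., ȳ_i ⊆ ȳ'_i for all i). Then P(q^Δ) ≤ P(q^{Δ'}). -/

import Mathlib

open scoped Classical

section AuxCore
open Finset

namespace PDBX

noncomputable section

variable {Z : Type*} [Fintype Z] [DecidableEq Z]

/-- product Bernoulli weight of a world -/
def wt (q : Z → ℝ) (ω : Z → Bool) : ℝ := ∏ z, if ω z then q z else 1 - q z

/-- satisfaction of a positive DNF -/
def sat (F : Finset (Finset Z)) (ω : Z → Bool) : Prop := ∃ T ∈ F, ∀ x ∈ T, ω x = true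

def ind (p : Prop) : ℝ := if p then 1 else 0

lemma ind_nonneg (p : Prop) : 0 ≤ ind p := by unfold ind; split <;> norm_num

lemma ind_le_one (p : Prop) : ind p ≤ 1 := by unfold ind; split <;> norm_num

lemma wt_nonneg {q : Z → ℝ} (hq0 : ∀ z, 0 ≤ q z) (hq1 : ∀ z, q z ≤ 1) (ω : Z → Bool) :
    0 ≤ wt q ω := by
  refine Finset.prod_nonneg fun z _ => ?_
  split
  · exact hq0 z
  · linarith [hq1 z]

lemma sum_pi_bool (f : Z → Bool → ℝ) :
    ∑ ω : Z → Bool, ∏ z, f z (ω z) = ∏ z, (f z true + f z false) := by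
  classical
  rw [← Fintype.prod_sum f]
  refine Finset.prod_congr rfl fun z _ => ?_
  simp [Fintype.sum_bool]

lemma wt_mul_prod (q : Z → ℝ) (K : Finset Z) (a b : Z → ℝ) :
    ∑ ω : Z → Bool, wt q ω * ∏ y ∈ K, (if ω y then a y else b y)
      = ∏ y ∈ K, (q y * a y + (1 - q y) * b y) := by
  classical
  have h1 : ∀ ω : Z → Bool, wt q ω * ∏ y ∈ K, (if ω y then a y else b y)
      = ∏ z, ((fun z (v : Bool) => (if v then q z else 1 - q z) *
          (if z ∈ K then (if v then a z else b z) else 1)) z (ω z)) := by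
    intro ω
    show _ = ∏ z, ((if ω z then q z else 1 - q z) *
          (if z ∈ K then (if ω z then a z else b z) else 1))
    rw [Finset.prod_mul_distrib]
    congr 1
    rw [Finset.prod_ite_mem, Finset.univ_inter]
  calc ∑ ω : Z → Bool, wt q ω * ∏ y ∈ K, (if ω y then a y else b y)
      = ∑ ω : Z → Bool, ∏ z, ((fun z (v : Bool) => (if v then q z else 1 - q z) *
          (if z ∈ K then (if v then a z else b z) else 1)) z (ω z)) :=
        Finset.sum_congr rfl fun ω _ => h1 ω
    _ = ∏ z, ((fun z (v : Bool) => (if v then q z else 1 - q z) *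
          (if z ∈ K then (if v then a z else b z) else 1)) z true +
        (fun z (v : Bool) => (if v then q z else 1 - q z) *
          (if z ∈ K then (if v then a z else b z) else 1)) z false) :=
        sum_pi_bool (fun z (v : Bool) => (if v then q z else 1 - q z) *
          (if z ∈ K then (if v then a z else b z) else 1))
    _ = ∏ z, (if z ∈ K then q z * a z + (1 - q z) * b z else 1) := by
        refine Finset.prod_congr rfl fun z _ => ?_
        by_cases h : z ∈ K <;> simp [h]
    _ = ∏ y ∈ K, (q y * a y + (1 - q y) * b y) := by
        rw [Finset.prod_ite_mem, Finset.univ_inter]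

lemma sum_wt (q : Z → ℝ) : ∑ ω : Z → Bool, wt q ω = 1 := by
  have := wt_mul_prod q ∅ (fun _ => 1) (fun _ => 1)
  simpa using this

lemma sum_wt_coord (q : Z → ℝ) (z0 : Z) :
    ∑ ω : Z → Bool, wt q ω * ind (ω z0 = true) = q z0 := by
  have := wt_mul_prod q {z0} (fun _ => 1) (fun _ => 0)
  simp only [Finset.prod_singleton, mul_one, mul_zero, add_zero] at this
  rw [← this]
  apply Finset.sum_congr rfl
  intro ω _
  congr 1
  unfold ind
  by_cases h : ω z0 = true <;> simp [h]

lemma sum_wt_disj (q : Z → ℝ) (K : Finset Z) :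
    ∑ ω : Z → Bool, wt q ω * ind (∃ y ∈ K, ω y = true) = 1 - ∏ y ∈ K, (1 - q y) := by
  have key : ∀ ω : Z → Bool, ind (∃ y ∈ K, ω y = true)
      = 1 - ∏ y ∈ K, (if ω y then (0:ℝ) else 1) := by
    intro ω
    by_cases h : ∃ y ∈ K, ω y = true
    · obtain ⟨y, hy, hωy⟩ := h
      rw [Finset.prod_eq_zero hy (by simp [hωy])]
      simp [ind]
      exact ⟨y, hy, hωy⟩
    · rw [Finset.prod_eq_one]
      · simp only [ind, if_neg h]; norm_num
      · intro y hy
        push_neg at h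
        have := h y hy
        simp only [Bool.not_eq_true] at this
        simp [this]
  simp_rw [key, mul_sub, mul_one]
  rw [Finset.sum_sub_distrib, sum_wt, wt_mul_prod q K (fun _ => 0) (fun _ => 1)]
  congr 1
  apply Finset.prod_congr rfl
  intro y _
  ring

/-! ### Splitting worlds along a predicate -/

def glue (p : Z → Prop) [DecidablePred p] (aa : {z // p z} → Bool) (bb : {z // ¬ p z} → Bool) : Z → Bool :=
  fun z => if h : p z then aa ⟨z, h⟩ else bb ⟨z, h⟩

lemma glue_pos {p : Z → Prop} [DecidablePred p] (aa : {z // p z} → Bool) (bb : {z // ¬ p z} → Bool)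
    {z : Z} (h : p z) : glue p aa bb z = aa ⟨z, h⟩ := dif_pos h

lemma glue_neg {p : Z → Prop} [DecidablePred p] (aa : {z // p z} → Bool) (bb : {z // ¬ p z} → Bool)
    {z : Z} (h : ¬ p z) : glue p aa bb z = bb ⟨z, h⟩ := dif_neg h

lemma sum_glue (p : Z → Prop) [DecidablePred p] (f : (Z → Bool) → ℝ) :
    ∑ ω : Z → Bool, f ω
      = ∑ aa : {z // p z} → Bool, ∑ bb : {z // ¬ p z} → Bool, f (glue p aa bb) := by
  classical
  calc ∑ ω : Z → Bool, f ω
      = ∑ x : ({z // p z} → Bool) × ({z // ¬ p z} → Bool), f (glue p x.1 x.2) := by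
        refine Fintype.sum_equiv (Equiv.piEquivPiSubtypeProd p (fun _ => Bool)) _ _ fun ω => ?_
        congr 1
        funext z
        by_cases h : p z <;> simp [glue, h, Equiv.piEquivPiSubtypeProd]
    _ = ∑ aa : {z // p z} → Bool, ∑ bb : {z // ¬ p z} → Bool, f (glue p aa bb) := by
        exact Fintype.sum_prod_type _

lemma wt_glue (q : Z → ℝ) (p : Z → Prop) [DecidablePred p] (aa : {z // p z} → Bool)
    (bb : {z // ¬ p z} → Bool) :
    wt q (glue p aa bb)
      = wt (fun z : {z // p z} => q z.1) aa * wt (fun z : {z // ¬ p z} => q z.1) bb := by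
  classical
  unfold wt
  rw [← Fintype.prod_subtype_mul_prod_subtype p
    (fun z => if glue p aa bb z then q z else 1 - q z)]
  congr 1
  · exact Finset.prod_congr rfl fun z _ => by rw [glue_pos aa bb z.2, Subtype.eta]
  · exact Finset.prod_congr rfl fun z _ => by rw [glue_neg aa bb z.2, Subtype.eta]

/-! ### monotonicity of sat -/

lemma sat_mono {F : Finset (Finset Z)} {ω ω' : Z → Bool}
    (h : ∀ z, ω z = true → ω' z = true) : sat F ω → sat F ω' := by
  rintro ⟨T, hT, hall⟩
  exact ⟨T, hT, fun x hx => h x (hall x hx)⟩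

lemma ind_congr {p q : Prop} (h : p ↔ q) : ind p = ind q := by
  unfold ind; exact if_congr h rfl rfl

/-! ### The single-merge step -/

lemma step_le (q : Z → ℝ) (hq0 : ∀ z, 0 ≤ q z) (hq1 : ∀ z, q z ≤ 1)
    (p : Z → Prop) [DecidablePred p] (e : Z) (he : p e) (hconst : ∀ z, p z → q z = q e)
    (F : Finset (Finset Z))
    (hF : ∀ T ∈ F, ∀ x ∈ T, ∀ y ∈ T, p x → p y → x = y) :
    ∑ ω : Z → Bool, wt q ω * ind (sat F (fun z => if p z then ω e else ω z))
      ≤ ∑ ω : Z → Bool, wt q ω * ind (sat F ω) := by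
  classical
  rw [sum_glue p (fun ω => wt q ω * ind (sat F (fun z => if p z then ω e else ω z))),
      sum_glue p (fun ω => wt q ω * ind (sat F ω))]
  conv_lhs => rw [Finset.sum_comm]
  conv_rhs => rw [Finset.sum_comm]
  refine Finset.sum_le_sum fun bb _ => ?_
  set qP : {z // p z} → ℝ := fun z => q z.1 with hqP
  set qN : {z // ¬ p z} → ℝ := fun z => q z.1 with hqN
  have hwtN : 0 ≤ wt qN bb := wt_nonneg (fun z => hq0 z.1) (fun z => hq1 z.1) bb
  set ehat : {z // p z} := ⟨e, he⟩ with hehat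
  set c : Prop := sat F (glue p (fun _ => false) bb) with hc_def
  set K : Finset {z // p z} := Finset.univ.filter
    (fun y => ∃ T ∈ F, y.1 ∈ T ∧ ∀ x ∈ T, ∀ hpx : ¬ p x, bb ⟨x, hpx⟩ = true) with hK_def
  have sat_iff : ∀ aa : {z // p z} → Bool,
      sat F (glue p aa bb) ↔ (c ∨ ∃ y ∈ K, aa y = true) := by
    intro aa
    constructor
    · rintro ⟨T, hT, hall⟩
      by_cases hTp : ∃ x ∈ T, p x
      · obtain ⟨x0, hx0, hpx0⟩ := hTp
        refine Or.inr ⟨⟨x0, hpx0⟩, ?_, ?_⟩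
        · rw [hK_def, Finset.mem_filter]
          refine ⟨Finset.mem_univ _, T, hT, hx0, fun x hx hpx => ?_⟩
          have := hall x hx; rwa [glue_neg aa bb hpx] at this
        · have := hall x0 hx0; rwa [glue_pos aa bb hpx0] at this
      · refine Or.inl ⟨T, hT, fun x hx => ?_⟩
        have hpx : ¬ p x := fun hpx => hTp ⟨x, hx, hpx⟩
        rw [glue_neg _ bb hpx]
        have := hall x hx; rwa [glue_neg aa bb hpx] at this
    · rintro (hc | ⟨y, hyK, hay⟩)
      · refine sat_mono (fun z hz => ?_) hc
        by_cases hpz : p z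
        · rw [glue_pos _ bb hpz] at hz; simp at hz
        · rw [glue_neg _ bb hpz] at hz ⊢; exact hz
      · rw [hK_def, Finset.mem_filter] at hyK
        obtain ⟨-, T, hT, hyT, hb⟩ := hyK
        refine ⟨T, hT, fun x hx => ?_⟩
        by_cases hpx : p x
        · have hxy : x = y.1 := hF T hT x hx y.1 hyT hpx y.2
          rw [glue_pos aa bb hpx]
          have : (⟨x, hpx⟩ : {z // p z}) = y := Subtype.ext hxy
          rw [this]; exact hay
        · rw [glue_neg aa bb hpx]; exact hb x hx hpx
  have rep_eq : ∀ aa : {z // p z} → Bool,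
      (fun z => if p z then glue p aa bb e else glue p aa bb z)
        = glue p (fun _ => aa ehat) bb := by
    intro aa; funext z
    by_cases h : p z
    · rw [if_pos h, glue_pos _ _ h, glue_pos _ _ he]
    · rw [if_neg h, glue_neg aa bb h, glue_neg (fun _ => aa ehat) bb h]
  have reorg : ∀ (g : ({z // p z} → Bool) → ℝ),
      ∑ aa : {z // p z} → Bool, wt q (glue p aa bb) * g aa
        = wt qN bb * ∑ aa : {z // p z} → Bool, wt qP aa * g aa := by
    intro g
    rw [Finset.mul_sum]
    refine Finset.sum_congr rfl fun aa _ => ?_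
    rw [wt_glue, hqP, hqN]; ring
  refine le_trans (le_of_eq (reorg _)) (le_trans ?_ (le_of_eq (reorg _).symm))
  refine mul_le_mul_of_nonneg_left ?_ hwtN
  have lrw : ∀ aa : {z // p z} → Bool,
      ind (sat F (fun z => if p z then glue p aa bb e else glue p aa bb z))
        = ind (c ∨ (∃ y ∈ K, aa ehat = true)) := by
    intro aa
    rw [rep_eq aa]
    exact ind_congr (sat_iff (fun _ => aa ehat))
  have rrw : ∀ aa : {z // p z} → Bool,
      ind (sat F (glue p aa bb)) = ind (c ∨ ∃ y ∈ K, aa y = true) := fun aa =>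
    ind_congr (sat_iff aa)
  simp_rw [lrw, rrw]
  by_cases hc : c
  · simp [ind, hc]
  · have lrw2 : ∀ aa : {z // p z} → Bool,
        ind (c ∨ (∃ y ∈ K, aa ehat = true)) = ind (∃ y ∈ K, aa ehat = true) :=
      fun aa => ind_congr (by tauto)
    have rrw2 : ∀ aa : {z // p z} → Bool,
        ind (c ∨ ∃ y ∈ K, aa y = true) = ind (∃ y ∈ K, aa y = true) :=
      fun aa => ind_congr (by tauto)
    rw [Finset.sum_congr rfl fun aa _ => congrArg (wt qP aa * ·) (lrw2 aa),
      Finset.sum_congr rfl fun aa _ => congrArg (wt qP aa * ·) (rrw2 aa)]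
    by_cases hK : K.Nonempty
    · have lrw3 : ∀ aa : {z // p z} → Bool,
          ind (∃ y ∈ K, aa ehat = true) = ind (aa ehat = true) := by
        intro aa
        refine ind_congr ⟨fun ⟨y, _, h⟩ => h, fun h => ?_⟩
        obtain ⟨y, hy⟩ := hK; exact ⟨y, hy, h⟩
      have hprod : ∏ y ∈ K, (1 - qP y) = (1 - q e) ^ K.card := by
        rw [Finset.prod_congr rfl (fun y (hy : y ∈ K) => by
          rw [hqP]; simp only []; rw [hconst y.1 y.2] :
            ∀ y ∈ K, (1 - qP y) = 1 - q e), Finset.prod_const]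
      have hpow : (1 - q e) ^ K.card ≤ 1 - q e := by
        refine pow_le_of_le_one (by linarith [hq1 e]) (by linarith [hq0 e]) ?_
        exact Finset.card_ne_zero_of_mem hK.choose_spec
      calc (∑ aa : {z // p z} → Bool, wt qP aa * ind (∃ y ∈ K, aa ehat = true))
          = ∑ aa : {z // p z} → Bool, wt qP aa * ind (aa ehat = true) :=
            Finset.sum_congr rfl fun aa _ => by rw [lrw3 aa]
        _ = q e := sum_wt_coord qP ehat
        _ ≤ 1 - (1 - q e) ^ K.card := by linarith
        _ = 1 - ∏ y ∈ K, (1 - qP y) := by rw [hprod]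
        _ = ∑ aa : {z // p z} → Bool, wt qP aa * ind (∃ y ∈ K, aa y = true) :=
            (sum_wt_disj qP K).symm
    · rw [Finset.not_nonempty_iff_eq_empty] at hK
      simp [hK, ind]

/-! ### Telescoping over fibers -/

lemma hybrid_le {X : Type*} [Fintype X] [DecidableEq X] (q : Z → ℝ)
    (hq0 : ∀ z, 0 ≤ q z) (hq1 : ∀ z, q z ≤ 1)
    (θ : Z → X) (σ : X → Z) (hθσ : ∀ x, θ (σ x) = x)
    (hqconst : ∀ z, q (σ (θ z)) = q z)
    (F : Finset (Finset Z))
    (hinj : ∀ T ∈ F, ∀ x ∈ T, ∀ y ∈ T, θ x = θ y → x = y)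
    (S : Finset X) :
    ∑ ω : Z → Bool, wt q ω * ind (sat F (fun z => if θ z ∈ S then ω (σ (θ z)) else ω z))
      ≤ ∑ ω : Z → Bool, wt q ω * ind (sat F ω) := by
  classical
  induction S using Finset.induction_on with
  | empty => simp
  | @insert x0 S hx0 IH =>
    set sS : Z → Z := fun z => if θ z ∈ S then σ (θ z) else z with hsS
    set FS : Finset (Finset Z) := F.image (fun T => T.image sS) with hFS
    have hθs : ∀ z, θ (sS z) = θ z := by
      intro z; rw [hsS]; simp only []
      by_cases h : θ z ∈ S <;> simp [h, hθσ]
    have hsat : ∀ ψ : Z → Bool, sat F (fun z => ψ (sS z)) ↔ sat FS ψ := by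
      intro ψ; constructor
      · rintro ⟨T, hT, hall⟩
        refine ⟨T.image sS, Finset.mem_image_of_mem _ hT, ?_⟩
        intro x hx
        rw [Finset.mem_image] at hx
        obtain ⟨u, hu, rfl⟩ := hx
        exact hall u hu
      · rintro ⟨T', hT', hall⟩
        rw [hFS, Finset.mem_image] at hT'
        obtain ⟨T, hT, rfl⟩ := hT'
        exact ⟨T, hT, fun x hx => hall _ (Finset.mem_image_of_mem _ hx)⟩
    set p : Z → Prop := fun z => θ z = x0 with hp
    have key : ∀ (ω : Z → Bool) (z : Z),
        (if θ z ∈ insert x0 S then ω (σ (θ z)) else ω z)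
          = (fun z' => if p z' then ω (σ x0) else ω z') (sS z) := by
      intro ω z
      simp only []
      by_cases h1 : θ z ∈ S
      · rw [if_pos (Finset.mem_insert_of_mem h1)]
        have hpz : ¬ p (sS z) := by
          rw [hp]; simp only [hθs z]
          intro hc; rw [hc] at h1; exact hx0 h1
        rw [if_neg hpz, hsS]; simp [h1]
      · by_cases h2 : θ z = x0
        · rw [if_pos (by rw [h2]; exact Finset.mem_insert_self _ _)]
          have hpz : p (sS z) := by rw [hp]; simp only [hθs z]; exact h2
          rw [if_pos hpz, h2]
        · rw [if_neg (by simp [h1, h2])]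
          have hpz : ¬ p (sS z) := by rw [hp]; simp only [hθs z]; exact h2
          rw [if_neg hpz, hsS]; simp [h1]
    have lhs_eq : ∀ ω : Z → Bool,
        ind (sat F (fun z => if θ z ∈ insert x0 S then ω (σ (θ z)) else ω z))
          = ind (sat FS (fun z => if p z then ω (σ x0) else ω z)) := by
      intro ω
      have e1 : (fun z => if θ z ∈ insert x0 S then ω (σ (θ z)) else ω z)
          = fun z => (fun z' => if p z' then ω (σ x0) else ω z') (sS z) := funext (key ω)
      rw [e1]
      exact ind_congr (hsat (fun z' => if p z' then ω (σ x0) else ω z'))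
    have rhs_eq : ∀ ω : Z → Bool,
        ind (sat F (fun z => if θ z ∈ S then ω (σ (θ z)) else ω z)) = ind (sat FS ω) := by
      intro ω
      have e1 : (fun z => if θ z ∈ S then ω (σ (θ z)) else ω z) = fun z => ω (sS z) := by
        funext z; rw [hsS]; simp only []
        by_cases h : θ z ∈ S <;> simp [h]
      rw [e1]
      exact ind_congr (hsat ω)
    have hFSinj : ∀ T' ∈ FS, ∀ x ∈ T', ∀ y ∈ T', p x → p y → x = y := by
      intro T' hT' x hx y hy hpx hpy
      rw [hFS, Finset.mem_image] at hT'
      obtain ⟨T, hT, rfl⟩ := hT'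
      rw [Finset.mem_image] at hx hy
      obtain ⟨u, hu, rfl⟩ := hx
      obtain ⟨v, hv, rfl⟩ := hy
      have hu0 : θ u = x0 := by rw [← hθs u]; exact hpx
      have hv0 : θ v = x0 := by rw [← hθs v]; exact hpy
      rw [hinj T hT u hu v hv (by rw [hu0, hv0])]
    have hconst : ∀ z, p z → q z = q (σ x0) := by
      intro z hz
      rw [← hqconst z]
      have : θ z = x0 := hz
      rw [this]
    calc ∑ ω : Z → Bool, wt q ω *
            ind (sat F (fun z => if θ z ∈ insert x0 S then ω (σ (θ z)) else ω z))
        = ∑ ω : Z → Bool, wt q ω * ind (sat FS (fun z => if p z then ω (σ x0) else ω z)) :=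
          Finset.sum_congr rfl fun ω _ => by rw [lhs_eq ω]
      _ ≤ ∑ ω : Z → Bool, wt q ω * ind (sat FS ω) :=
          step_le q hq0 hq1 p (σ x0) (hθσ x0) hconst FS hFSinj
      _ = ∑ ω : Z → Bool, wt q ω * ind (sat F (fun z => if θ z ∈ S then ω (σ (θ z)) else ω z)) :=
          Finset.sum_congr rfl fun ω _ => by rw [rhs_eq ω]
      _ ≤ ∑ ω : Z → Bool, wt q ω * ind (sat F ω) := IH

/-! ### Marginalization along a section -/

lemma sum_wt_section {X : Type*} [Fintype X] [DecidableEq X] (q : Z → ℝ)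
    (σ : X → Z) (θ : Z → X) (hθσ : ∀ x, θ (σ x) = x) (f : (X → Bool) → ℝ) :
    ∑ ω : Z → Bool, wt q ω * f (fun x => ω (σ x))
      = ∑ ωX : X → Bool, wt (fun x => q (σ x)) ωX * f ωX := by
  classical
  set p : Z → Prop := fun z => ∃ x, σ x = z with hp
  rw [sum_glue p (fun ω => wt q ω * f (fun x => ω (σ x)))]
  set e : X ≃ {z // p z} :=
    { toFun := fun x => ⟨σ x, ⟨x, rfl⟩⟩
      invFun := fun s => θ s.1
      left_inv := fun x => hθσ x
      right_inv := fun s => by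
        obtain ⟨x, hx⟩ := s.2
        apply Subtype.ext
        show σ (θ s.1) = s.1
        rw [← hx, hθσ] } with he
  have hglue : ∀ (aa : {z // p z} → Bool) (bb : {z // ¬ p z} → Bool),
      (fun x => glue p aa bb (σ x)) = fun x => aa (e x) := by
    intro aa bb; funext x
    rw [glue_pos aa bb ⟨x, rfl⟩]
    exact congrArg aa (Subtype.ext rfl)
  have hwte : ∀ aa : {z // p z} → Bool,
      wt (fun s : {z // p z} => q s.1) aa = wt (fun x => q (σ x)) (fun x => aa (e x)) := by
    intro aa
    unfold wt
    exact (Fintype.prod_equiv e _ _ fun x => rfl).symm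
  calc ∑ aa : {z // p z} → Bool, ∑ bb : {z // ¬ p z} → Bool,
          wt q (glue p aa bb) * f (fun x => glue p aa bb (σ x))
      = ∑ aa : {z // p z} → Bool,
          (wt (fun s : {z // p z} => q s.1) aa * f (fun x => aa (e x)))
            * ∑ bb : {z // ¬ p z} → Bool, wt (fun s : {z // ¬ p z} => q s.1) bb := by
        refine Finset.sum_congr rfl fun aa _ => ?_
        rw [Finset.mul_sum]
        refine Finset.sum_congr rfl fun bb _ => ?_
        rw [wt_glue, hglue aa bb]; ring
    _ = ∑ aa : {z // p z} → Bool,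
          wt (fun s : {z // p z} => q s.1) aa * f (fun x => aa (e x)) := by
        rw [sum_wt (fun s : {z // ¬ p z} => q s.1)]
        simp_rw [mul_one]
    _ = ∑ ωX : X → Bool, wt (fun x => q (σ x)) ωX * f ωX := by
        refine Fintype.sum_equiv (Equiv.arrowCongr e.symm (Equiv.refl Bool)) _ _ fun aa => ?_
        have hEE : (Equiv.arrowCongr e.symm (Equiv.refl Bool)) aa = fun x => aa (e x) := by
          funext x
          simp [Equiv.arrowCongr]
        rw [hEE, hwte aa]
  
/-! ### The abstract dissociation inequality -/

lemma merge_le {X : Type*} [Fintype X] [DecidableEq X] (q : Z → ℝ)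
    (hq0 : ∀ z, 0 ≤ q z) (hq1 : ∀ z, q z ≤ 1)
    (θ : Z → X) (σ : X → Z) (hθσ : ∀ x, θ (σ x) = x)
    (hqconst : ∀ z, q (σ (θ z)) = q z)
    (F : Finset (Finset Z))
    (hinj : ∀ T ∈ F, ∀ x ∈ T, ∀ y ∈ T, θ x = θ y → x = y) :
    ∑ ωX : X → Bool, wt (fun x => q (σ x)) ωX * ind (sat F (fun z => ωX (θ z)))
      ≤ ∑ ω : Z → Bool, wt q ω * ind (sat F ω) := by
  have h := hybrid_le q hq0 hq1 θ σ hθσ hqconst F hinj Finset.univ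
  rw [← sum_wt_section q σ θ hθσ (fun ωX => ind (sat F (fun z => ωX (θ z))))]
  simpa using h

end

end PDBX

end AuxCore

namespace PDB

noncomputable section

/-! ### Monotone DNF formulas over a finite variable set -/

/-- Probability that a monotone DNF formula (given by its finite set of implicants, each a
finite set of positive variables) is true, when each variable `x` is independently true with
probability `p x`. -/
def dnfProb {X : Type*} [Fintype X] (p : X → ℝ) (F : Finset (Finset X)) : ℝ :=
  ∑ ω : X → Bool,
    (∏ x : X, if ω x = true then p x else 1 - p x) *
      (if ∃ T ∈ F, ∀ x ∈ T, ω x = true then 1 else 0)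

/-- A prime implicant of a monotone DNF formula: a minimal implicant. -/
def IsPrimeImplicant {X : Type*} (F : Finset (Finset X)) (T : Finset X) : Prop :=
  T ∈ F ∧ ∀ S ∈ F, S ⊆ T → S = T

variable {A V dom : Type*}

/-! ### Self-join-free conjunctive queries: hierarchy and connectivity.
A self-join-free conjunctive query is given by its atoms: a family `atoms : A → Finset V`
assigning to each of the (pairwise distinct) relation symbols its finite set of variables;
`H` denotes the set of head variables (treated as constants); all other variables are
existential.  A Boolean query has `H = ∅`. -/

/-- `at(x)`: the atoms among `S` that contain the variable `x`. -/
def atOf (atoms : A → Finset V) (S : Finset A) (x : V) : Finset A :=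
  S.filter (fun i => x ∈ atoms i)

/-- The query consisting of the atoms `S` is hierarchical, with the variables in `H`
treated as constants (head variables): for any two existential variables, their atom sets
are comparable or disjoint. -/
def HierOn (atoms : A → Finset V) (S : Finset A) (H : Finset V) : Prop :=
  ∀ x : V, x ∉ H → ∀ y : V, y ∉ H →
    atOf atoms S x ⊆ atOf atoms S y ∨ atOf atoms S x ∩ atOf atoms S y = ∅ ∨
      atOf atoms S y ⊆ atOf atoms S x

/-- A Boolean query (with all its atoms) is hierarchical. -/
def Hier [Fintype A] (atoms : A → Finset V) : Prop :=
  HierOn atoms Finset.univ ∅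

/-- The set of atoms `S` is disconnected: it can be partitioned into two nonempty sets
sharing no variables. -/
def Disconn (atoms : A → Finset V) (S : Finset A) : Prop :=
  ∃ T : Finset A, T ⊆ S ∧ T.Nonempty ∧ (S \ T).Nonempty ∧
    ∀ i ∈ T, ∀ j ∈ S \ T, atoms i ∩ atoms j = ∅

/-- `T` is a connected component of the set of atoms `S`: a maximal connected subset. -/
def IsComp (atoms : A → Finset V) (S T : Finset A) : Prop :=
  T ⊆ S ∧ T.Nonempty ∧ ¬ Disconn atoms T ∧
    ∀ U : Finset A, T ⊆ U → U ⊆ S → ¬ Disconn atoms U → U = T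

/-- `xs` is a cut-set of the query with atoms `S`: a set of its variables whose removal
disconnects the query. -/
def IsCutSet (atoms : A → Finset V) (S : Finset A) (xs : Finset V) : Prop :=
  xs ⊆ S.sup atoms ∧ Disconn (fun i => atoms i \ xs) S

/-- a minimal cut-set (min-cut-set) -/
def MinCut (atoms : A → Finset V) (S : Finset A) (xs : Finset V) : Prop :=
  IsCutSet atoms S xs ∧ ∀ ys : Finset V, ys ⊂ xs → ¬ IsCutSet atoms S ys

/-- the separator variables of a Boolean query: the variables occurring in every atom -/
def SepVars [Fintype A] [Fintype V] (atoms : A → Finset V) : Finset V :=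
  Finset.univ.filter (fun x => ∀ i : A, x ∈ atoms i)

/-- the set of variables of a query -/
def varsOf [Fintype A] (atoms : A → Finset V) : Finset V :=
  Finset.univ.sup atoms

/-! ### Dissociations -/

/-- `Δ` is a dissociation of the query with atoms `atoms` and head variables `H`:
each atom receives extra existential variables of the query that it does not already
contain. -/
def IsDiss [Fintype A] (atoms : A → Finset V) (H : Finset V) (Δ : A → Finset V) : Prop :=
  ∀ i : A, Δ i ⊆ (varsOf atoms \ H) \ atoms i

/-- the atoms of the dissociated query `q^Δ` -/
def dissAtoms (atoms Δ : A → Finset V) : A → Finset V := fun i => atoms i ∪ Δ i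

/-- the partial dissociation order `Δ ≼ Δ'` -/
def dissLE (Δ Δ' : A → Finset V) : Prop := ∀ i : A, Δ i ⊆ Δ' i

/-- a safe dissociation: the dissociated query is hierarchical -/
def SafeDiss [Fintype A] (atoms : A → Finset V) (H : Finset V) (Δ : A → Finset V) : Prop :=
  IsDiss atoms H Δ ∧ HierOn (dissAtoms atoms Δ) Finset.univ H

/-- a minimal safe dissociation: no smaller dissociation (in the order `≼`) is safe -/
def MinSafeDiss [Fintype A] (atoms : A → Finset V) (H : Finset V) (Δ : A → Finset V) : Prop :=
  SafeDiss atoms H Δ ∧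
    ∀ Δ' : A → Finset V, SafeDiss atoms H Δ' → dissLE Δ' Δ → Δ' = Δ

/-! ### Tuple-independent probabilistic databases -/

/-- A tuple-independent probabilistic database for the query with atoms `atoms` over the
finite domain `dom`: each relation `i` is a finite set of tuples (functions from the
variables of the atom to the domain), each carrying a probability. -/
structure DB (atoms : A → Finset V) (dom : Type*) where
  tuples : ∀ i : A, Finset ({x // x ∈ atoms i} → dom)
  prob : ∀ i : A, ({x // x ∈ atoms i} → dom) → ℝ

/-- all tuple probabilities lie in [0,1] -/
def DB.Valid {atoms : A → Finset V} (D : DB atoms dom) : Prop :=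
  ∀ i : A, ∀ t ∈ D.tuples i, 0 ≤ D.prob i t ∧ D.prob i t ≤ 1

/-- the restriction of a valuation of all variables to the tuple format of atom `i` -/
def restrict (atoms : A → Finset V) (i : A) (ν : V → dom) : {x // x ∈ atoms i} → dom :=
  fun x => ν x.1

/-- restriction of a tuple to a smaller variable set -/
def restrictTup {xs ys : Finset V} (h : xs ⊆ ys) (t : {x // x ∈ ys} → dom) :
    {x // x ∈ xs} → dom :=
  fun x => t ⟨x.1, h x.2⟩

/-- `P(q)`: the probability that the Boolean query with atoms `atoms` is true in a possible
world chosen by independently including each tuple `t` of `D` with probability `p(t)`. -/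
def queryProb [Fintype A] (atoms : A → Finset V) (D : DB atoms dom) : ℝ :=
  ∑ W : ∀ i : A, {t // t ∈ D.tuples i} → Bool,
    (∏ i : A, ∏ t : {t // t ∈ D.tuples i},
        if W i t = true then D.prob i t.1 else 1 - D.prob i t.1) *
      (if ∃ ν : V → dom, ∀ i : A,
            ∃ h : restrict atoms i ν ∈ D.tuples i, W i ⟨restrict atoms i ν, h⟩ = true
        then 1 else 0)

/-- The dissociated database `D^Δ`: relation `R_i^{ȳ_i}` contains one copy of each tuple
`t ∈ R_i` for every assignment of the added variables `ȳ_i` to domain values, with the same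
probability as `t`. -/
def dissDB [Fintype dom] (atoms Δ : A → Finset V) (D : DB atoms dom) :
    DB (dissAtoms atoms Δ) dom where
  tuples i := Finset.univ.filter
    (fun t : {x // x ∈ dissAtoms atoms Δ i} → dom =>
      restrictTup (show atoms i ⊆ dissAtoms atoms Δ i from Finset.subset_union_left) t
        ∈ D.tuples i)
  prob i t :=
    D.prob i
      (restrictTup (show atoms i ⊆ dissAtoms atoms Δ i from Finset.subset_union_left) t)

/-- `P(q^Δ)`: the probability of the dissociated query on the dissociated database. -/
def dissProb [Fintype A] [Fintype dom] (atoms Δ : A → Finset V) (D : DB atoms dom) : ℝ :=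
  queryProb (dissAtoms atoms Δ) (dissDB atoms Δ D)

/-- The propagation score `ρ(q)`: the minimum of `P(q^Δ)` over all safe dissociations. -/
def propScore [Fintype A] [Fintype dom] (atoms : A → Finset V)
    (D : DB atoms dom) : ℝ :=
  sInf { r : ℝ | ∃ Δ : A → Finset V, SafeDiss atoms ∅ Δ ∧ r = dissProb atoms Δ D }

/-- the database with all tuple probabilities scaled by the factor `f` -/
def scaleDB {atoms : A → Finset V} (D : DB atoms dom) (f : ℝ) : DB atoms dom where
  tuples := D.tuples
  prob i t := f * D.prob i t

/-- relation `i` is deterministic: all its tuples have probability 1 (otherwise it is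
probabilistic) -/
def Deterministic {atoms : A → Finset V} (D : DB atoms dom) (i : A) : Prop :=
  ∀ t ∈ D.tuples i, D.prob i t = 1

/-- The lineage `F_{q,D}` of the Boolean query on `D`: the monotone DNF over the tuples of
`D` whose implicants correspond to the satisfying assignments of the query. -/
def lineage [Fintype A] [Fintype V] [Fintype dom] (atoms : A → Finset V)
    (D : DB atoms dom) :
    Finset (Finset (Σ i : A, {x // x ∈ atoms i} → dom)) :=
  ((Finset.univ : Finset (V → dom)).filter
      (fun ν => ∀ i : A, restrict atoms i ν ∈ D.tuples i)).image
    (fun ν => Finset.univ.image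
      (fun i : A => (⟨i, restrict atoms i ν⟩ : Σ i : A, {x // x ∈ atoms i} → dom)))

/-- The substitution `θ : D^Δ → D` mapping every tuple of a dissociated relation
`R_i^{ȳ_i}` to its projection onto the original variables of `R_i`. -/
def dissTupleMap (atoms Δ : A → Finset V) :
    (Σ i : A, {x // x ∈ dissAtoms atoms Δ i} → dom) →
      Σ i : A, {x // x ∈ atoms i} → dom :=
  fun t =>
    ⟨t.1, restrictTup (show atoms t.1 ⊆ dissAtoms atoms Δ t.1 from Finset.subset_union_left)
      t.2⟩

/-! ### Functional dependencies -/

/-- `Determines Γ xs y`: the variable `y` is in the closure `xs⁺` of `xs` under the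
functional dependencies `Γ`. -/
inductive Determines (Γ : Set (Finset V × V)) : Finset V → V → Prop
  | mem (xs : Finset V) (y : V) (h : y ∈ xs) : Determines Γ xs y
  | step (xs : Finset V) (fd : Finset V × V) (hfd : fd ∈ Γ)
      (hall : ∀ z ∈ fd.1, Determines Γ xs z) : Determines Γ xs fd.2

/-- The functional dependency `fd` is an FD on the attributes of relation `j` that holds
in the database `D`. -/
def FDHolds (atoms : A → Finset V) (D : DB atoms dom) (j : A) (fd : Finset V × V) : Prop :=
  ∃ h1 : fd.1 ⊆ atoms j, ∃ h2 : fd.2 ∈ atoms j,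
    ∀ t ∈ D.tuples j, ∀ t' ∈ D.tuples j,
      (∀ v : V, ∀ hv : v ∈ fd.1, t ⟨v, h1 hv⟩ = t' ⟨v, h1 hv⟩) →
        t ⟨fd.2, h2⟩ = t' ⟨fd.2, h2⟩

/-! ### Query plans -/

/-- Query plans: atoms, duplicate-eliminating projections (given by the retained head
variables), and k-ary natural joins. -/
inductive Plan (A V : Type*) where
  | atom : A → Plan A V
  | proj : Finset V → Plan A V → Plan A V
  | join : List (Plan A V) → Plan A V

namespace Plan

/-- the head variables of a plan -/
def hvar (atoms : A → Finset V) : Plan A V → Finset V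
  | .atom i => atoms i
  | .proj hv _ => hv
  | .join Ps => Ps.attach.foldr (fun P acc => hvar atoms P.1 ∪ acc) ∅
decreasing_by
  all_goals simp_wf
  all_goals try have := List.sizeOf_lt_of_mem P.2
  all_goals omega

/-- the multiset of atoms used by a plan -/
def atomsOf : Plan A V → Multiset A
  | .atom i => {i}
  | .proj _ P => atomsOf P
  | .join Ps => Ps.attach.foldr (fun P acc => atomsOf P.1 + acc) 0
decreasing_by
  all_goals simp_wf
  all_goals try have := List.sizeOf_lt_of_mem P.2
  all_goals omega

def isProj : Plan A V → Prop
  | .proj _ _ => True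
  | _ => False

def isJoin : Plan A V → Prop
  | .join _ => True
  | _ => False

/-- structural well-formedness: projections only retain available variables, joins are at
least binary, and joins and projections alternate -/
def WF (atoms : A → Finset V) : Plan A V → Prop
  | .atom _ => True
  | .proj hv P => hv ⊆ hvar atoms P ∧ ¬ isProj P ∧ WF atoms P
  | .join Ps => 2 ≤ Ps.length ∧ ∀ P ∈ Ps, ¬ isJoin P ∧ WF atoms P
decreasing_by
  all_goals simp_wf
  all_goals try rename_i h; try have := List.sizeOf_lt_of_mem h
  all_goals omega

/-- a safe plan: at every join, all subplans have the same head variables -/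
def Safe (atoms : A → Finset V) : Plan A V → Prop
  | .atom _ => True
  | .proj _ P => Safe atoms P
  | .join Ps => (∀ P ∈ Ps, Safe atoms P) ∧
      ∀ P ∈ Ps, ∀ Q ∈ Ps, hvar atoms P = hvar atoms Q
decreasing_by
  all_goals simp_wf
  all_goals try rename_i h; try have := List.sizeOf_lt_of_mem h
  all_goals omega

/-- `P` is a (well-formed) query plan for the query with atoms `atoms` and head variables
`H`: it uses every atom exactly once and its output head variables are exactly `H`
(for a Boolean query, `H = ∅`, i.e. all existential variables are projected away). -/
def IsPlanFor [Fintype A] (atoms : A → Finset V) (H : Finset V) (P : Plan A V) : Prop :=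
  WF atoms P ∧ atomsOf P = (Finset.univ : Finset A).val ∧ hvar atoms P = H

/-- the join variables: the union of the head variables of a list of subplans -/
def joinVars (atoms : A → Finset V) (Ps : List (Plan A V)) : Finset V :=
  (Ps.map (hvar atoms)).foldr (· ∪ ·) ∅

/-- Identification of plans up to join order, flattening of nested joins, and removal of
trivial (identity) projections. -/
inductive Equiv (atoms : A → Finset V) : Plan A V → Plan A V → Prop
  | refl (P) : Equiv atoms P P
  | symm {P Q} : Equiv atoms P Q → Equiv atoms Q P
  | trans {P Q R} : Equiv atoms P Q → Equiv atoms Q R → Equiv atoms P R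
  | projCongr (hv) {P Q} : Equiv atoms P Q → Equiv atoms (.proj hv P) (.proj hv Q)
  | joinCongr {Ps Qs} : List.Forall₂ (Equiv atoms) Ps Qs →
      Equiv atoms (.join Ps) (.join Qs)
  | joinPerm {Ps Qs} : Ps.Perm Qs → Equiv atoms (.join Ps) (.join Qs)
  | joinFlatten (Ps Qs Rs) :
      Equiv atoms (.join (Ps ++ .join Qs :: Rs)) (.join (Ps ++ Qs ++ Rs))
  | projTriv {P} (hv) (h : hv = hvar atoms P) : Equiv atoms (.proj hv P) P

/-- The extensional score semantics of a plan evaluated on the database `D`: output tuples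
are represented by total valuations `ν : V → dom` (only the values on the head variables
matter; duplicates are represented canonically by the default value `d₀` outside the head
variables).  Joins multiply scores, and duplicate-eliminating projections combine the
scores `s_1, …, s_n` of the tuples projecting to a common output tuple to
`1 - ∏ (1 - s_i)`. -/
def score [Fintype V] [Fintype dom] (atoms : A → Finset V) (D : DB atoms dom) (d₀ : dom) :
    Plan A V → (V → dom) → ℝ
  | .atom i, ν =>
      if restrict atoms i ν ∈ D.tuples i then D.prob i (restrict atoms i ν) else 0
  | .proj hv P, ν =>
      1 - ∏ μ ∈ Finset.univ.filter (fun μ : V → dom =>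
            (∀ v : V, v ∉ hvar atoms P → μ v = d₀) ∧ ∀ v ∈ hv, μ v = ν v),
          (1 - score atoms D d₀ P μ)
  | .join Ps, ν => (Ps.attach.map (fun P => score atoms D d₀ P.1 ν)).prod
decreasing_by
  all_goals simp_wf
  all_goals try have := List.sizeOf_lt_of_mem P.2
  all_goals omega

/-- the score of a Boolean plan -/
def bscore [Fintype V] [Fintype dom] [Inhabited dom] (atoms : A → Finset V)
    (D : DB atoms dom) (P : Plan A V) : ℝ :=
  score atoms D default P (fun _ => default)

/-- Dropping the dissociated variables from a plan (for a dissociated query) to obtain the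
corresponding plan `P^Δ` for the original query: every projection list is restricted to
the variables actually available in the original query. -/
def eraseTo (atoms : A → Finset V) : Plan A V → Plan A V
  | .atom i => .atom i
  | .proj hv P => .proj (hv ∩ hvar atoms (eraseTo atoms P)) (eraseTo atoms P)
  | .join Ps => .join (Ps.attach.map (fun P => eraseTo atoms P.1))
decreasing_by
  all_goals simp_wf
  all_goals try have := List.sizeOf_lt_of_mem P.2
  all_goals omega

/-- The dissociation `Δ^P` corresponding to a plan `P`: for each join operator with join
variables `JVar = ⋃_j HVar(P_j)`, every relation occurring in subplan `P_j` receives the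
variables `JVar ∖ HVar(P_j)`. -/
def dissOf (atoms : A → Finset V) : Plan A V → A → Finset V
  | .atom _ => fun _ => ∅
  | .proj _ P => dissOf atoms P
  | .join Ps => fun i =>
      Ps.attach.foldr (fun P acc =>
        (if i ∈ atomsOf P.1 then
            (joinVars atoms Ps \ hvar atoms P.1) ∪ dissOf atoms P.1 i
          else ∅) ∪ acc) ∅
decreasing_by
  all_goals simp_wf
  all_goals try have := List.sizeOf_lt_of_mem P.2
  all_goals omega

end Plan

/-- The recursive algorithm `MP` enumerating the minimal query plans of the query with
atom set `S` and head variables `H` (head variables are treated as constants):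
* if the query has a single atom, return the projection of that atom onto the head
  variables;
* if the query (after removing the head variables) is disconnected, return any join of
  minimal plans of its connected components (each component keeping the head variables
  occurring in it);
* otherwise, for any minimal cut-set `ys` of the query minus its head variables, return
  the plan projecting `ys` away from any minimal plan of the query with head variables
  `H ∪ ys`. -/
inductive MPrel (atoms : A → Finset V) : Finset A → Finset V → Plan A V → Prop
  | single (i : A) (H : Finset V) : MPrel atoms {i} H (.proj H (.atom i))
  | disc (S : Finset A) (H : Finset V) (parts : List (Finset A)) (Ps : List (Plan A V))
      (hdup : parts.Nodup) (hlen : 2 ≤ parts.length)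
      (hparts : ∀ T : Finset A, T ∈ parts ↔ IsComp (fun i => atoms i \ H) S T)
      (hlen2 : parts.length = Ps.length)
      (hPs : ∀ n : ℕ, ∀ h1 : n < parts.length, ∀ h2 : n < Ps.length,
        MPrel atoms parts[n] (H ∩ (parts[n]).sup atoms) Ps[n]) :
      MPrel atoms S H (.join Ps)
  | conn (S : Finset A) (H : Finset V) (ys : Finset V) (P : Plan A V)
      (hcard : 2 ≤ S.card)
      (hconn : ¬ Disconn (fun i => atoms i \ H) S)
      (hcut : MinCut (fun i => atoms i \ H) S ys)
      (hP : MPrel atoms S (H ∪ ys) P) :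
      MPrel atoms S H (.proj H P)


section DissAux

variable {A V dom : Type*} [Fintype A] [Fintype V] [Fintype dom]

/-- extension of the tuple probability to all potential tuples (`0` outside the database) -/
def qOf (atoms2 : A → Finset V) (D2 : DB atoms2 dom) :
    (Σ i : A, ({x // x ∈ atoms2 i} → dom)) → ℝ :=
  fun z => if z.2 ∈ D2.tuples z.1 then D2.prob z.1 z.2 else 0

lemma queryProb_eq_bigsum (atoms2 : A → Finset V) (D2 : DB atoms2 dom) :
    queryProb atoms2 D2
      = ∑ ω : (Σ i : A, ({x // x ∈ atoms2 i} → dom)) → Bool,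
          PDBX.wt (qOf atoms2 D2) ω *
            PDBX.ind (∃ ν : V → dom, ∀ i : A,
              restrict atoms2 i ν ∈ D2.tuples i ∧ ω ⟨i, restrict atoms2 i ν⟩ = true) := by
  classical
  set Z : Type _ := (Σ i : A, ({x // x ∈ atoms2 i} → dom)) with hZ
  set p : Z → Prop := fun z => z.2 ∈ D2.tuples z.1 with hp
  set Ca : ({z : Z // p z} → Bool) → Prop := fun aa => ∃ ν : V → dom, ∀ i : A,
      ∃ h : restrict atoms2 i ν ∈ D2.tuples i,
        aa ⟨⟨i, restrict atoms2 i ν⟩, h⟩ = true with hCa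
  set Es : (Σ i : A, {t // t ∈ D2.tuples i}) ≃ {z : Z // p z} :=
    { toFun := fun zs => ⟨⟨zs.1, zs.2.1⟩, zs.2.2⟩
      invFun := fun s => ⟨s.1.1, ⟨s.1.2, s.2⟩⟩
      left_inv := fun _ => rfl
      right_inv := fun _ => rfl } with hEs
  set EC : ({z : Z // p z} → Bool) ≃ (∀ i : A, {t // t ∈ D2.tuples i} → Bool) :=
    { toFun := fun aa i t => aa ⟨⟨i, t.1⟩, t.2⟩
      invFun := fun W s => W s.1.1 ⟨s.1.2, s.2⟩
      left_inv := fun _ => rfl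
      right_inv := fun _ => rfl } with hEC
  have hA : queryProb atoms2 D2
      = ∑ aa : {z : Z // p z} → Bool,
          PDBX.wt (fun s : {z : Z // p z} => qOf atoms2 D2 s.1) aa * PDBX.ind (Ca aa) := by
    refine (Fintype.sum_equiv EC _ _ fun aa => ?_).symm
    congr 1
    · -- weights
      unfold PDBX.wt
      calc ∏ s : {z : Z // p z},
            (if aa s then qOf atoms2 D2 s.1 else 1 - qOf atoms2 D2 s.1)
          = ∏ zs : (Σ i : A, {t // t ∈ D2.tuples i}),
              (if aa (Es zs) then qOf atoms2 D2 (Es zs).1 else 1 - qOf atoms2 D2 (Es zs).1) :=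
            (Fintype.prod_equiv Es _ _ fun zs => rfl).symm
        _ = ∏ i : A, ∏ t : {t // t ∈ D2.tuples i},
              (if aa (Es ⟨i, t⟩) then qOf atoms2 D2 (Es ⟨i, t⟩).1
                else 1 - qOf atoms2 D2 (Es ⟨i, t⟩).1) := by
            rw [← Finset.univ_sigma_univ, Finset.prod_sigma]
        _ = ∏ i : A, ∏ t : {t // t ∈ D2.tuples i},
              (if (EC aa) i t = true then D2.prob i t.1 else 1 - D2.prob i t.1) := by
            refine Finset.prod_congr rfl fun i _ => Finset.prod_congr rfl fun t _ => ?_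
            have h1 : qOf atoms2 D2 (Es ⟨i, t⟩).1 = D2.prob i t.1 := by
              show (if t.1 ∈ D2.tuples i then D2.prob i t.1 else 0) = D2.prob i t.1
              rw [if_pos t.2]
            rw [h1]
            rfl
  have hB : (∑ ω : Z → Bool,
        PDBX.wt (qOf atoms2 D2) ω *
          PDBX.ind (∃ ν : V → dom, ∀ i : A,
            restrict atoms2 i ν ∈ D2.tuples i ∧ ω ⟨i, restrict atoms2 i ν⟩ = true))
      = ∑ aa : {z : Z // p z} → Bool,
          PDBX.wt (fun s : {z : Z // p z} => qOf atoms2 D2 s.1) aa * PDBX.ind (Ca aa) := by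
    rw [PDBX.sum_glue p (fun ω => PDBX.wt (qOf atoms2 D2) ω *
      PDBX.ind (∃ ν : V → dom, ∀ i : A,
        restrict atoms2 i ν ∈ D2.tuples i ∧ ω ⟨i, restrict atoms2 i ν⟩ = true))]
    refine Finset.sum_congr rfl fun aa _ => ?_
    have hiff : ∀ bb : {z : Z // ¬ p z} → Bool,
        (∃ ν : V → dom, ∀ i : A, restrict atoms2 i ν ∈ D2.tuples i ∧
            PDBX.glue p aa bb ⟨i, restrict atoms2 i ν⟩ = true) ↔ Ca aa := by
      intro bb
      constructor
      · rintro ⟨ν, hν⟩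
        refine ⟨ν, fun i => ⟨(hν i).1, ?_⟩⟩
        have h2 := (hν i).2
        rwa [PDBX.glue_pos aa bb ((hν i).1 :
          p ⟨i, restrict atoms2 i ν⟩)] at h2
      · rintro ⟨ν, hν⟩
        refine ⟨ν, fun i => ?_⟩
        obtain ⟨h, hv⟩ := hν i
        exact ⟨h, by rw [PDBX.glue_pos aa bb (h : p ⟨i, restrict atoms2 i ν⟩)]; exact hv⟩
    calc ∑ bb : {z : Z // ¬ p z} → Bool,
          PDBX.wt (qOf atoms2 D2) (PDBX.glue p aa bb) *
            PDBX.ind (∃ ν : V → dom, ∀ i : A,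
              restrict atoms2 i ν ∈ D2.tuples i ∧
                PDBX.glue p aa bb ⟨i, restrict atoms2 i ν⟩ = true)
        = ∑ bb : {z : Z // ¬ p z} → Bool,
            (PDBX.wt (fun s : {z : Z // p z} => qOf atoms2 D2 s.1) aa * PDBX.ind (Ca aa)) *
              PDBX.wt (fun s : {z : Z // ¬ p z} => qOf atoms2 D2 s.1) bb := by
          refine Finset.sum_congr rfl fun bb _ => ?_
          rw [PDBX.wt_glue, PDBX.ind_congr (hiff bb)]
          ring
      _ = PDBX.wt (fun s : {z : Z // p z} => qOf atoms2 D2 s.1) aa * PDBX.ind (Ca aa) := by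
          rw [← Finset.mul_sum, PDBX.sum_wt, mul_one]
  rw [hA, hB]

end DissAux

/-- Partial dissociation order.  If `Δ ≼ Δ'` (pointwise inclusion of the
added variable sets) for two dissociations of a Boolean self-join-free conjunctive query,
then `P(q^Δ) ≤ P(q^{Δ'})`. -/
theorem dissociation_order_monotone
    {A V dom : Type*} [Fintype A] [Fintype V] [Fintype dom]
    (atoms : A → Finset V) (D : DB atoms dom) (hD : D.Valid)
    (Δ Δ' : A → Finset V) (hΔ : IsDiss atoms ∅ Δ) (hΔ' : IsDiss atoms ∅ Δ')
    (hle : dissLE Δ Δ') :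
    dissProb atoms Δ D ≤ dissProb atoms Δ' D := by
  classical
  by_cases hdom : Nonempty dom
  · obtain ⟨d0⟩ := hdom
    have hsub : ∀ i, dissAtoms atoms Δ i ⊆ dissAtoms atoms Δ' i :=
      fun i => Finset.union_subset_union (Finset.Subset.refl _) (hle i)
    have hA1 : ∀ i, atoms i ⊆ dissAtoms atoms Δ i := fun i => Finset.subset_union_left
    have hA2 : ∀ i, atoms i ⊆ dissAtoms atoms Δ' i := fun i => Finset.subset_union_left
    set θ : (Σ i : A, ({x // x ∈ dissAtoms atoms Δ' i} → dom)) →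
        (Σ i : A, ({x // x ∈ dissAtoms atoms Δ i} → dom)) :=
      fun z => ⟨z.1, restrictTup (hsub z.1) z.2⟩ with hθ
    set σ : (Σ i : A, ({x // x ∈ dissAtoms atoms Δ i} → dom)) →
        (Σ i : A, ({x // x ∈ dissAtoms atoms Δ' i} → dom)) :=
      fun x => ⟨x.1, fun v =>
        if h : v.1 ∈ dissAtoms atoms Δ x.1 then x.2 ⟨v.1, h⟩ else d0⟩ with hσ
    set q' := qOf (dissAtoms atoms Δ') (dissDB atoms Δ' D) with hq'
    set qX := qOf (dissAtoms atoms Δ) (dissDB atoms Δ D) with hqX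
    have hmem' : ∀ (i : A) (t : {x // x ∈ dissAtoms atoms Δ' i} → dom),
        t ∈ (dissDB atoms Δ' D).tuples i ↔ restrictTup (hA2 i) t ∈ D.tuples i := by
      intro i t
      simp [dissDB, Finset.mem_filter]
    have hmemX : ∀ (i : A) (t : {x // x ∈ dissAtoms atoms Δ i} → dom),
        t ∈ (dissDB atoms Δ D).tuples i ↔ restrictTup (hA1 i) t ∈ D.tuples i := by
      intro i t
      simp [dissDB, Finset.mem_filter]
    have hθσ : ∀ x, θ (σ x) = x := by
      rintro ⟨i, t⟩
      have ht : restrictTup (hsub i)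
          (fun v : {x // x ∈ dissAtoms atoms Δ' i} =>
            if h : v.1 ∈ dissAtoms atoms Δ i then t ⟨v.1, h⟩ else d0) = t := by
        funext v
        show (if h : v.1 ∈ dissAtoms atoms Δ i then t ⟨v.1, h⟩ else d0) = t v
        rw [dif_pos v.2]
      exact congrArg (Sigma.mk i) ht
    have hrestσ : ∀ (x : Σ i : A, ({y // y ∈ dissAtoms atoms Δ i} → dom)),
        restrictTup (hA2 x.1) (σ x).2 = restrictTup (hA1 x.1) x.2 := by
      rintro ⟨i, t⟩
      funext v
      show (if h : v.1 ∈ dissAtoms atoms Δ i then t ⟨v.1, h⟩ else d0) = t ⟨v.1, hA1 i v.2⟩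
      rw [dif_pos (hA1 i v.2)]
    have hq'eq : ∀ z, q' z
        = if restrictTup (hA2 z.1) z.2 ∈ D.tuples z.1
            then D.prob z.1 (restrictTup (hA2 z.1) z.2) else 0 := by
      intro z
      show (if z.2 ∈ (dissDB atoms Δ' D).tuples z.1
          then (dissDB atoms Δ' D).prob z.1 z.2 else 0) = _
      exact if_congr (hmem' z.1 z.2) rfl rfl
    have hqXeq : ∀ x, qX x
        = if restrictTup (hA1 x.1) x.2 ∈ D.tuples x.1
            then D.prob x.1 (restrictTup (hA1 x.1) x.2) else 0 := by
      intro x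
      show (if x.2 ∈ (dissDB atoms Δ D).tuples x.1
          then (dissDB atoms Δ D).prob x.1 x.2 else 0) = _
      exact if_congr (hmemX x.1 x.2) rfl rfl
    have hq'const : ∀ z, q' (σ (θ z)) = q' z := by
      intro z
      rw [hq'eq (σ (θ z)), hq'eq z]
      have h12 : restrictTup (hA2 (σ (θ z)).1) (σ (θ z)).2 = restrictTup (hA2 z.1) z.2 := by
        rw [hrestσ (θ z)]
        rfl
      rw [h12]
    have hqσ : ∀ x, q' (σ x) = qX x := by
      intro x
      rw [hq'eq (σ x), hqXeq x]
      rw [hrestσ x]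
    have hq0' : ∀ z, 0 ≤ q' z := by
      intro z
      rw [hq'eq z]
      split
      · exact (hD z.1 _ (by assumption)).1
      · exact le_refl 0
    have hq1' : ∀ z, q' z ≤ 1 := by
      intro z
      rw [hq'eq z]
      split
      · exact (hD z.1 _ (by assumption)).2
      · norm_num
    set G : (V → dom) → Prop := fun ν => ∀ i, restrict atoms i ν ∈ D.tuples i with hG
    set F : Finset (Finset (Σ i : A, ({x // x ∈ dissAtoms atoms Δ' i} → dom))) :=
      (Finset.univ.filter G).image
        (fun ν => Finset.univ.image
          (fun i : A =>
            (⟨i, restrict (dissAtoms atoms Δ') i ν⟩ :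
              Σ i : A, ({x // x ∈ dissAtoms atoms Δ' i} → dom)))) with hF
    have hsatF : ∀ ψ : (Σ i : A, ({x // x ∈ dissAtoms atoms Δ' i} → dom)) → Bool,
        PDBX.sat F ψ ↔ ∃ ν : V → dom, G ν ∧
          ∀ i : A, ψ ⟨i, restrict (dissAtoms atoms Δ') i ν⟩ = true := by
      intro ψ
      constructor
      · rintro ⟨T, hT, hall⟩
        rw [hF, Finset.mem_image] at hT
        obtain ⟨ν, hν, rfl⟩ := hT
        rw [Finset.mem_filter] at hν
        exact ⟨ν, hν.2, fun i => hall _ (Finset.mem_image_of_mem _ (Finset.mem_univ i))⟩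
      · rintro ⟨ν, hGν, hco⟩
        refine ⟨Finset.univ.image
          (fun i : A =>
            (⟨i, restrict (dissAtoms atoms Δ') i ν⟩ :
              Σ i : A, ({x // x ∈ dissAtoms atoms Δ' i} → dom))), ?_, ?_⟩
        · rw [hF]
          exact Finset.mem_image_of_mem _ (Finset.mem_filter.mpr ⟨Finset.mem_univ _, hGν⟩)
        · intro x hx
          rw [Finset.mem_image] at hx
          obtain ⟨i, -, rfl⟩ := hx
          exact hco i
    have hinj : ∀ T ∈ F, ∀ x ∈ T, ∀ y ∈ T, θ x = θ y → x = y := by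
      intro T hT x hx y hy hxy
      rw [hF, Finset.mem_image] at hT
      obtain ⟨ν, -, rfl⟩ := hT
      rw [Finset.mem_image] at hx hy
      obtain ⟨i, -, rfl⟩ := hx
      obtain ⟨j, -, rfl⟩ := hy
      have hij : i = j := congrArg Sigma.fst hxy
      subst hij
      rfl
    have hcond' : ∀ ω : (Σ i : A, ({x // x ∈ dissAtoms atoms Δ' i} → dom)) → Bool,
        (∃ ν : V → dom, ∀ i : A,
            restrict (dissAtoms atoms Δ') i ν ∈ (dissDB atoms Δ' D).tuples i ∧
              ω ⟨i, restrict (dissAtoms atoms Δ') i ν⟩ = true)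
          ↔ PDBX.sat F ω := by
      intro ω
      rw [hsatF ω]
      constructor
      · rintro ⟨ν, hν⟩
        exact ⟨ν, fun i => (hmem' i _).1 (hν i).1, fun i => (hν i).2⟩
      · rintro ⟨ν, hGν, hco⟩
        exact ⟨ν, fun i => ⟨(hmem' i _).2 (hGν i), hco i⟩⟩
    have hcondX : ∀ ωX : (Σ i : A, ({x // x ∈ dissAtoms atoms Δ i} → dom)) → Bool,
        (∃ ν : V → dom, ∀ i : A,
            restrict (dissAtoms atoms Δ) i ν ∈ (dissDB atoms Δ D).tuples i ∧
              ωX ⟨i, restrict (dissAtoms atoms Δ) i ν⟩ = true)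
          ↔ PDBX.sat F (fun z => ωX (θ z)) := by
      intro ωX
      rw [hsatF (fun z => ωX (θ z))]
      constructor
      · rintro ⟨ν, hν⟩
        exact ⟨ν, fun i => (hmemX i _).1 (hν i).1, fun i => (hν i).2⟩
      · rintro ⟨ν, hGν, hco⟩
        exact ⟨ν, fun i => ⟨(hmemX i _).2 (hGν i), hco i⟩⟩
    have hwtX : ∀ ωX : (Σ i : A, ({x // x ∈ dissAtoms atoms Δ i} → dom)) → Bool,
        PDBX.wt qX ωX = PDBX.wt (fun x => q' (σ x)) ωX := by
      intro ωX
      have : qX = fun x => q' (σ x) := funext fun x => (hqσ x).symm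
      rw [this]
    calc dissProb atoms Δ D
        = ∑ ωX : (Σ i : A, ({x // x ∈ dissAtoms atoms Δ i} → dom)) → Bool,
            PDBX.wt qX ωX *
              PDBX.ind (∃ ν : V → dom, ∀ i : A,
                restrict (dissAtoms atoms Δ) i ν ∈ (dissDB atoms Δ D).tuples i ∧
                  ωX ⟨i, restrict (dissAtoms atoms Δ) i ν⟩ = true) :=
          queryProb_eq_bigsum (dissAtoms atoms Δ) (dissDB atoms Δ D)
      _ = ∑ ωX : (Σ i : A, ({x // x ∈ dissAtoms atoms Δ i} → dom)) → Bool,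
            PDBX.wt (fun x => q' (σ x)) ωX *
              PDBX.ind (PDBX.sat F (fun z => ωX (θ z))) := by
          refine Finset.sum_congr rfl fun ωX _ => ?_
          rw [PDBX.ind_congr (hcondX ωX), hwtX ωX]
      _ ≤ ∑ ω : (Σ i : A, ({x // x ∈ dissAtoms atoms Δ' i} → dom)) → Bool,
            PDBX.wt q' ω * PDBX.ind (PDBX.sat F ω) :=
          PDBX.merge_le q' hq0' hq1' θ σ hθσ hq'const F hinj
      _ = ∑ ω : (Σ i : A, ({x // x ∈ dissAtoms atoms Δ' i} → dom)) → Bool,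
            PDBX.wt q' ω *
              PDBX.ind (∃ ν : V → dom, ∀ i : A,
                restrict (dissAtoms atoms Δ') i ν ∈ (dissDB atoms Δ' D).tuples i ∧
                  ω ⟨i, restrict (dissAtoms atoms Δ') i ν⟩ = true) :=
          Finset.sum_congr rfl fun ω _ => by rw [PDBX.ind_congr (hcond' ω)]
      _ = dissProb atoms Δ' D :=
          (queryProb_eq_bigsum (dissAtoms atoms Δ') (dissDB atoms Δ' D)).symm
  · by_cases hV : Nonempty V
    · have h0 : ∀ (at2 : A → Finset V) (D2 : DB at2 dom), queryProb at2 D2 = 0 := by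
        intro at2 D2
        unfold queryProb
        refine Finset.sum_eq_zero fun W _ => ?_
        rw [if_neg, mul_zero]
        rintro ⟨ν, -⟩
        exact hdom ⟨ν (Classical.choice hV)⟩
      show queryProb (dissAtoms atoms Δ) (dissDB atoms Δ D)
          ≤ queryProb (dissAtoms atoms Δ') (dissDB atoms Δ' D)
      rw [h0, h0]
    · have hVempty : ∀ s : Finset V, s = ∅ := by
        intro s
        refine Finset.eq_empty_of_forall_notMem fun v _ => hV ⟨v⟩
      have hΔeq : Δ = Δ' := funext fun i => by rw [hVempty (Δ i), hVempty (Δ' i)]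
      rw [hΔeq]


end

end PDB
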